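/- Let U be a finite set, κ : U × U → ℝ with κ ≥ 0 and symmetric, and d : U × U → ℝ with d ≥ 0, symmetric, d(i,i) = 0, and d(i,k) ≤ d(i,j) + d(j,k) for all i,j,k ∈ U. Fix i ∈ U, a constant c₀ > 0, and Δ > 0. Define B(r) = { j ∈ U : d(i,j) < r }, vol(r) = c₀ + Σ_{{j,k} ⊆ B(r)} κ(j,k) d(j,k) + Σ_{j ∈ B(r), k ∈ U∖B(r)} κ(j,k)(r − d(i,j)), and ∂(r) = Σ_{j ∈ B(r), k ∈ U∖B(r)} κ(j,k). Then there exists r ∈ (0, Δ] such that Δ · ∂(r) ≤ vol(r) · log( vol(Δ) / vol(0) ). -/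

import Mathlib

open scoped Classical

/-- The open ball of radius `r` around `i` with respect to `d`, inside the finite set `U`. -/
noncomputable def openBall {U : Type*} [Fintype U] (d : U → U → ℝ) (i : U) (r : ℝ) :
    Finset U :=
  Finset.univ.filter fun j : U => d i j < r

/-- The volume of the open ball of radius `r` around `i`: a constant `c₀`, plus the
`κ`-weighted `d`-length of the (unordered) pairs inside the ball, plus the partial
lengths `κ j k * (r - d i j)` of the pairs crossing the boundary of the ball. -/
noncomputable def ballVol {U : Type*} [Fintype U] (κ d : U → U → ℝ) (i : U)
    (c₀ r : ℝ) : ℝ :=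
  c₀ + (∑ j ∈ openBall d i r, ∑ k ∈ openBall d i r, κ j k * d j k) / 2 +
    ∑ j ∈ openBall d i r, ∑ k ∈ (openBall d i r)ᶜ, κ j k * (r - d i j)

/-- The boundary of the open ball of radius `r` around `i`: the total `κ`-weight of
the pairs crossing the boundary of the ball. -/
noncomputable def ballBoundary {U : Type*} [Fintype U] (κ d : U → U → ℝ) (i : U)
    (r : ℝ) : ℝ :=
  ∑ j ∈ openBall d i r, ∑ k ∈ (openBall d i r)ᶜ, κ j k

section Aux
variable {U : Type*} [Fintype U]
variable (κ d : U → U → ℝ) (i : U) (c₀ : ℝ)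

lemma sg_vol_ge (hκ0 : ∀ j k, 0 ≤ κ j k) (hd0 : ∀ j k, 0 ≤ d j k) (r : ℝ) :
    c₀ ≤ ballVol κ d i c₀ r := by
  unfold ballVol
  have h1 : 0 ≤ (∑ j ∈ openBall d i r, ∑ k ∈ openBall d i r, κ j k * d j k) / 2 := by
    apply div_nonneg _ (by norm_num)
    exact Finset.sum_nonneg fun j _ => Finset.sum_nonneg fun k _ =>
      mul_nonneg (hκ0 j k) (hd0 j k)
  have h2 : 0 ≤ ∑ j ∈ openBall d i r, ∑ k ∈ (openBall d i r)ᶜ, κ j k * (r - d i j) := by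
    apply Finset.sum_nonneg; intro j hj
    have hj' : d i j < r := by simpa [openBall] using hj
    exact Finset.sum_nonneg fun k _ => mul_nonneg (hκ0 j k) (by linarith)
  linarith

lemma sg_vol_zero (hd0 : ∀ j k, 0 ≤ d j k) : ballVol κ d i c₀ 0 = c₀ := by
  have hb : openBall d i 0 = ∅ := by
    ext j; simp only [openBall, Finset.mem_filter, Finset.mem_univ, true_and,
      Finset.notMem_empty, iff_false]
    exact not_lt.2 (hd0 i j)
  simp [ballVol, hb]

lemma sg_ball_eq (a r b : ℝ) (har : a < r) (hrb : r ≤ b)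
    (hfree : ∀ j, ¬ (a < d i j ∧ d i j < b)) :
    openBall d i r = Finset.univ.filter (fun j => d i j ≤ a) := by
  ext j
  simp only [openBall, Finset.mem_filter, Finset.mem_univ, true_and]
  constructor
  · intro h
    by_contra hle
    exact hfree j ⟨lt_of_not_ge hle, lt_of_lt_of_le h hrb⟩
  · intro h; linarith

end Aux

section Aux2
variable {U : Type*} [Fintype U]
variable (κ d : U → U → ℝ) (i : U) (c₀ : ℝ)

lemma sg_jump (hκ0 : ∀ j k, 0 ≤ κ j k) (hκs : ∀ j k, κ j k = κ k j)
    (hd0 : ∀ j k, 0 ≤ d j k) (hds : ∀ j k, d j k = d k j)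
    (hdt : ∀ i j k : U, d i k ≤ d i j + d j k) (a : ℝ)
    (S : Finset U) (hS : S = Finset.univ.filter (fun j => d i j ≤ a)) :
    ballVol κ d i c₀ a ≤
      c₀ + (∑ j ∈ S, ∑ k ∈ S, κ j k * d j k) / 2 +
        ∑ j ∈ S, ∑ k ∈ Sᶜ, κ j k * (a - d i j) := by
  classical
  set B := openBall d i a with hB
  set E := S \ B with hEdef
  have hBS : B ⊆ S := by
    intro j hj
    simp only [hB, openBall, Finset.mem_filter, Finset.mem_univ, true_and] at hj
    simp only [hS, Finset.mem_filter, Finset.mem_univ, true_and]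
    exact le_of_lt hj
  have hdE : ∀ j ∈ E, d i j = a := by
    intro j hj
    rw [hEdef, Finset.mem_sdiff] at hj
    obtain ⟨hjS, hjB⟩ := hj
    rw [hS, Finset.mem_filter] at hjS
    rw [hB] at hjB
    simp only [openBall, Finset.mem_filter, Finset.mem_univ, true_and, not_lt] at hjB
    exact le_antisymm hjS.2 hjB
  have hdB : ∀ j ∈ B, d i j < a := by
    intro j hj
    simpa [hB, openBall] using hj
  have hSeq : S = B ∪ E := by
    rw [hEdef, Finset.union_sdiff_of_subset hBS]
  have hdBE : Disjoint B E := Finset.disjoint_sdiff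
  have hBceq : Bᶜ = E ∪ Sᶜ := by
    ext j
    simp only [hEdef, Finset.mem_union, Finset.mem_compl, Finset.mem_sdiff]
    constructor
    · intro hj
      by_cases h : j ∈ S
      · exact Or.inl ⟨h, hj⟩
      · exact Or.inr h
    · rintro (⟨_, h⟩ | h)
      · exact h
      · exact fun hj => h (hBS hj)
  have hdESc : Disjoint E Sᶜ := by
    rw [Finset.disjoint_left]
    intro j hj hj'
    exact Finset.mem_compl.mp hj' ((hEdef ▸ Finset.sdiff_subset) hj)
  -- key inequalities
  have h3 : 0 ≤ ∑ j ∈ E, ∑ k ∈ Sᶜ, κ j k * (a - d i j) := by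
    apply Finset.sum_nonneg; intro j hj
    have := hdE j hj
    apply Finset.sum_nonneg; intro k _
    apply mul_nonneg (hκ0 j k); linarith
  have h4 : 0 ≤ ∑ j ∈ E, ∑ k ∈ E, κ j k * d j k :=
    Finset.sum_nonneg fun j _ => Finset.sum_nonneg fun k _ =>
      mul_nonneg (hκ0 j k) (hd0 j k)
  have h5 : ∑ j ∈ E, ∑ k ∈ B, κ j k * d j k = ∑ j ∈ B, ∑ k ∈ E, κ j k * d j k := by
    rw [Finset.sum_comm]
    apply Finset.sum_congr rfl; intro j _
    apply Finset.sum_congr rfl; intro k _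
    rw [hκs j k, hds j k]
  have h6 : ∑ j ∈ B, ∑ k ∈ E, κ j k * (a - d i j) ≤ ∑ j ∈ B, ∑ k ∈ E, κ j k * d j k := by
    apply Finset.sum_le_sum; intro j _
    apply Finset.sum_le_sum; intro k hk
    apply mul_le_mul_of_nonneg_left _ (hκ0 j k)
    have ht := hdt i j k
    have := hdE k hk
    linarith
  -- expand
  rw [ballVol]
  rw [show openBall d i a = B from rfl]
  set C := Sᶜ with hC
  rw [hBceq, hSeq]
  simp only [Finset.sum_union hdBE, Finset.sum_union hdESc, Finset.sum_add_distrib]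
  linarith
end Aux2

section Aux3
variable {U : Type*} [Fintype U]
variable (κ d : U → U → ℝ) (i : U) (c₀ : ℝ)

lemma sg_bd_nonneg (hκ0 : ∀ j k, 0 ≤ κ j k) (r : ℝ) :
    0 ≤ ballBoundary κ d i r :=
  Finset.sum_nonneg fun j _ => Finset.sum_nonneg fun k _ => hκ0 j k

lemma sg_jump' (hκ0 : ∀ j k, 0 ≤ κ j k) (hκs : ∀ j k, κ j k = κ k j)
    (hd0 : ∀ j k, 0 ≤ d j k) (hds : ∀ j k, d j k = d k j)
    (hdt : ∀ i j k : U, d i k ≤ d i j + d j k) (a b : ℝ) (hab : a < b)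
    (hfree : ∀ j, ¬ (a < d i j ∧ d i j < b)) :
    ballVol κ d i c₀ a ≤ ballVol κ d i c₀ b - ballBoundary κ d i b * (b - a) := by
  classical
  set S := Finset.univ.filter (fun j : U => d i j ≤ a) with hS
  have hball : openBall d i b = S := sg_ball_eq d i a b b hab le_rfl hfree
  have hexp : ballVol κ d i c₀ b - ballBoundary κ d i b * (b - a) =
      c₀ + (∑ j ∈ S, ∑ k ∈ S, κ j k * d j k) / 2 +
        ∑ j ∈ S, ∑ k ∈ Sᶜ, κ j k * (a - d i j) := by
    rw [ballVol, ballBoundary, hball]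
    have : ∑ j ∈ S, ∑ k ∈ Sᶜ, κ j k * (b - d i j) -
        (∑ j ∈ S, ∑ k ∈ Sᶜ, κ j k) * (b - a) =
        ∑ j ∈ S, ∑ k ∈ Sᶜ, κ j k * (a - d i j) := by
      rw [Finset.sum_mul, ← Finset.sum_sub_distrib]
      apply Finset.sum_congr rfl; intro j _
      rw [Finset.sum_mul, ← Finset.sum_sub_distrib]
      apply Finset.sum_congr rfl; intro k _
      ring
    linarith
  rw [hexp]
  exact sg_jump κ d i c₀ hκ0 hκs hd0 hds hdt a S hS

lemma sg_step (hκ0 : ∀ j k, 0 ≤ κ j k) (hκs : ∀ j k, κ j k = κ k j)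
    (hd0 : ∀ j k, 0 ≤ d j k) (hds : ∀ j k, d j k = d k j)
    (hdt : ∀ i j k : U, d i k ≤ d i j + d j k) (hc₀ : 0 < c₀)
    (a b Δ L : ℝ) (hab : a < b) (hΔ : 0 < Δ)
    (hfree : ∀ j, ¬ (a < d i j ∧ d i j < b))
    (hcontra : ballVol κ d i c₀ b * L < Δ * ballBoundary κ d i b) :
    Real.log (ballVol κ d i c₀ a) + L * (b - a) / Δ <
      Real.log (ballVol κ d i c₀ b) := by
  set va := ballVol κ d i c₀ a with hva
  set vb := ballVol κ d i c₀ b with hvb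
  set bd := ballBoundary κ d i b with hbd
  have hvapos : 0 < va := lt_of_lt_of_le hc₀ (sg_vol_ge κ d i c₀ hκ0 hd0 a)
  have hvbpos : 0 < vb := lt_of_lt_of_le hc₀ (sg_vol_ge κ d i c₀ hκ0 hd0 b)
  have hbd0 : 0 ≤ bd := sg_bd_nonneg κ d i hκ0 b
  have hX : va ≤ vb - bd * (b - a) :=
    sg_jump' κ d i c₀ hκ0 hκs hd0 hds hdt a b hab hfree
  have hXpos : 0 < vb - bd * (b - a) := lt_of_lt_of_le hvapos hX
  have hlog1 : Real.log (vb - bd * (b - a)) - Real.log vb ≤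
      (vb - bd * (b - a)) / vb - 1 := by
    have := Real.log_le_sub_one_of_pos (div_pos hXpos hvbpos)
    rwa [Real.log_div (ne_of_gt hXpos) (ne_of_gt hvbpos)] at this
  have hlog2 : Real.log va ≤ Real.log (vb - bd * (b - a)) :=
    Real.log_le_log hvapos hX
  have heq : 1 - (vb - bd * (b - a)) / vb = bd * (b - a) / vb := by
    field_simp
    ring
  have hq : L * (b - a) / Δ < bd * (b - a) / vb := by
    rw [div_lt_div_iff₀ hΔ hvbpos]
    nlinarith [mul_lt_mul_of_pos_right hcontra (sub_pos.2 hab)]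
  linarith

end Aux3


/-- Sphere-growing lemma: there is a radius `r ∈ (0, Δ]` whose ball has expansion
`∂(r)/vol(r)` at most `(1/Δ) · log(vol(Δ)/vol(0))`. -/
theorem statement10 {U : Type*} [Fintype U] [DecidableEq U]
    (κ : U → U → ℝ) (hκ0 : ∀ j k : U, 0 ≤ κ j k) (hκs : ∀ j k : U, κ j k = κ k j)
    (d : U → U → ℝ) (hd0 : ∀ j k : U, 0 ≤ d j k) (hds : ∀ j k : U, d j k = d k j)
    (hdd : ∀ j : U, d j j = 0) (hdt : ∀ i j k : U, d i k ≤ d i j + d j k)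
    (i : U) (c₀ : ℝ) (hc₀ : 0 < c₀) (Δ : ℝ) (hΔ : 0 < Δ) :
    ∃ r : ℝ, 0 < r ∧ r ≤ Δ ∧
      Δ * ballBoundary κ d i r ≤
        ballVol κ d i c₀ r * Real.log (ballVol κ d i c₀ Δ / ballVol κ d i c₀ 0) := by
  classical
  by_contra hcon
  push_neg at hcon
  set L := Real.log (ballVol κ d i c₀ Δ / ballVol κ d i c₀ 0) with hL
  have hcon' : ∀ r : ℝ, 0 < r → r ≤ Δ →
      ballVol κ d i c₀ r * L < Δ * ballBoundary κ d i r := hcon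
  have key : ∀ n : ℕ, ∀ a : ℝ, 0 ≤ a → a < Δ →
      (Finset.univ.filter (fun j : U => a < d i j ∧ d i j < Δ)).card ≤ n →
      Real.log (ballVol κ d i c₀ a) + L * (Δ - a) / Δ <
        Real.log (ballVol κ d i c₀ Δ) := by
    intro n
    induction n with
    | zero =>
      intro a h0a haΔ hcard
      have hfree : ∀ j, ¬ (a < d i j ∧ d i j < Δ) := by
        intro j hj
        have hmem : j ∈ Finset.univ.filter (fun j : U => a < d i j ∧ d i j < Δ) := by
          simp [hj.1, hj.2]
        rw [Finset.card_eq_zero.1 (Nat.le_zero.1 hcard)] at hmem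
        exact absurd hmem (Finset.notMem_empty j)
      exact sg_step κ d i c₀ hκ0 hκs hd0 hds hdt hc₀ a Δ Δ L haΔ hΔ hfree
        (hcon' Δ hΔ le_rfl)
    | succ n ih =>
      intro a h0a haΔ hcard
      by_cases hfree : ∀ j, ¬ (a < d i j ∧ d i j < Δ)
      · exact sg_step κ d i c₀ hκ0 hκs hd0 hds hdt hc₀ a Δ Δ L haΔ hΔ hfree
          (hcon' Δ hΔ le_rfl)
      · push_neg at hfree
        obtain ⟨j1, hj1a, hj1Δ⟩ := by
          simpa [not_forall, not_not, not_and, Classical.not_imp] using hfree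
        set F := Finset.univ.filter (fun j : U => a < d i j ∧ d i j < Δ) with hF
        have hFne : F.Nonempty := ⟨j1, by simp [hF, hj1a, hj1Δ]⟩
        obtain ⟨j0, hj0F, hmin⟩ := F.exists_min_image (fun j => d i j) hFne
        have hj0 : a < d i j0 ∧ d i j0 < Δ := by
          simpa [hF] using hj0F
        set t := d i j0 with ht
        have hfree1 : ∀ j, ¬ (a < d i j ∧ d i j < t) := by
          intro j hj
          have hjF : j ∈ F := by
            simp only [hF, Finset.mem_filter, Finset.mem_univ, true_and]
            exact ⟨hj.1, lt_trans hj.2 hj0.2⟩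
          exact absurd (hmin j hjF) (not_le.2 hj.2)
        have hstep1 : Real.log (ballVol κ d i c₀ a) + L * (t - a) / Δ <
            Real.log (ballVol κ d i c₀ t) :=
          sg_step κ d i c₀ hκ0 hκs hd0 hds hdt hc₀ a t Δ L hj0.1 hΔ hfree1
            (hcon' t (lt_of_le_of_lt h0a hj0.1) (le_of_lt hj0.2))
        have hsub : Finset.univ.filter (fun j : U => t < d i j ∧ d i j < Δ) ⊆ F := by
          intro j hj
          simp only [Finset.mem_filter, Finset.mem_univ, true_and] at hj
          simp only [hF, Finset.mem_filter, Finset.mem_univ, true_and]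
          exact ⟨lt_trans hj0.1 hj.1, hj.2⟩
        have hj0not : j0 ∉ Finset.univ.filter (fun j : U => t < d i j ∧ d i j < Δ) := by
          simp [ht]
        have hcard' : (Finset.univ.filter (fun j : U => t < d i j ∧ d i j < Δ)).card ≤ n := by
          have hss : Finset.univ.filter (fun j : U => t < d i j ∧ d i j < Δ) ⊂ F :=
            Finset.ssubset_iff_of_subset hsub |>.2 ⟨j0, hj0F, hj0not⟩
          have := Finset.card_lt_card hss
          omega
        have hstep2 := ih t (le_trans h0a (le_of_lt hj0.1)) hj0.2 hcard'
        have hring : L * (t - a) / Δ + L * (Δ - t) / Δ = L * (Δ - a) / Δ := by ring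
        linarith
  have hvol0 : ballVol κ d i c₀ 0 = c₀ := sg_vol_zero κ d i c₀ hd0
  have hvΔ : 0 < ballVol κ d i c₀ Δ :=
    lt_of_lt_of_le hc₀ (sg_vol_ge κ d i c₀ hκ0 hd0 Δ)
  have hLr : L = Real.log (ballVol κ d i c₀ Δ) - Real.log c₀ := by
    rw [hL, hvol0, Real.log_div (ne_of_gt hvΔ) (ne_of_gt hc₀)]
  have h0 := key _ 0 le_rfl hΔ le_rfl
  rw [hvol0] at h0
  have hdiv : L * (Δ - 0) / Δ = L := by
    field_simp
    ring
  linarith
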